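/- 𝒜 is a constraint dissolving mapping for the constraint C: (a) for every X ∈ 𝓜, 𝒜(X) = X; and (b) for every X ∈ 𝓜 and every direction Z ∈ 𝓕, the Fréchet derivative of the composite map C∘𝒜 at X in direction Z vanishes: D(C∘𝒜)(X)[Z] = 0. -/

import Mathlib

open Matrix

attribute [local instance] Matrix.frobeniusNormedAddCommGroup Matrix.frobeniusNormedSpace

section helpers

variable {a b c : ℕ}

lemma matMulBdd (a b c : ℕ) : IsBoundedBilinearMap ℝ
    (fun P : Matrix (Fin a) (Fin b) ℝ × Matrix (Fin b) (Fin c) ℝ => P.1 * P.2) where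
  add_left x₁ x₂ y := Matrix.add_mul x₁ x₂ y
  smul_left c x y := Matrix.smul_mul c x y
  add_right x y₁ y₂ := Matrix.mul_add x y₁ y₂
  smul_right c x y := Matrix.mul_smul x c y
  bound := ⟨1, one_pos, fun x y => by simpa using Matrix.frobenius_norm_mul x y⟩

lemma hasFDerivAt_matmul {E : Type*} [NormedAddCommGroup E] [NormedSpace ℝ E]
    {f : E → Matrix (Fin a) (Fin b) ℝ} {g : E → Matrix (Fin b) (Fin c) ℝ}
    {f' : E →L[ℝ] Matrix (Fin a) (Fin b) ℝ} {g' : E →L[ℝ] Matrix (Fin b) (Fin c) ℝ}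
    {x : E} (hf : HasFDerivAt f f' x) (hg : HasFDerivAt g g' x)
    {D : E →L[ℝ] Matrix (Fin a) (Fin c) ℝ}
    (hD : ∀ z, D z = f' z * g x + f x * g' z) :
    HasFDerivAt (fun y => f y * g y) D x := by
  have h := ((matMulBdd a b c).hasFDerivAt (f x, g x)).comp x (hf.prodMk hg)
  refine h.congr_fderiv (ContinuousLinearMap.ext fun z => ?_)
  refine Eq.trans ?_ (hD z).symm
  simp [IsBoundedBilinearMap.deriv_apply]
  exact add_comm _ _

end helpers

/-- Frobenius inner product `⟨A, B⟩ = tr(AᵀB)`. -/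
noncomputable def frobInner {n p : ℕ} (A B : Matrix (Fin n) (Fin p) ℝ) : ℝ :=
  (Aᵀ * B).trace

/-- The constraint map `C(X) = Xᵀ φ(X) − I_p`. -/
noncomputable def Cmap {n p : ℕ}
    (φ : Matrix (Fin n) (Fin p) ℝ →ₗ[ℝ] Matrix (Fin n) (Fin p) ℝ)
    (X : Matrix (Fin n) (Fin p) ℝ) : Matrix (Fin p) (Fin p) ℝ :=
  Xᵀ * φ X - 1

/-- The constraint dissolving operator `𝒜(X) = (3/2)X − (1/2)X φ(X)ᵀ X`. -/
noncomputable def Amap {n p : ℕ}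
    (φ : Matrix (Fin n) (Fin p) ℝ →ₗ[ℝ] Matrix (Fin n) (Fin p) ℝ)
    (X : Matrix (Fin n) (Fin p) ℝ) : Matrix (Fin n) (Fin p) ℝ :=
  (3/2 : ℝ) • X - (1/2 : ℝ) • (X * (φ X)ᵀ * X)

/-- `𝒢 = span{X₁ᵀ X₂ : X₁, X₂ ∈ 𝓕}`. -/
noncomputable def Gspan {n p : ℕ} (𝓕 : Submodule ℝ (Matrix (Fin n) (Fin p) ℝ)) :
    Submodule ℝ (Matrix (Fin p) (Fin p) ℝ) :=
  Submodule.span ℝ {T | ∃ X₁ ∈ 𝓕, ∃ X₂ ∈ 𝓕, T = X₁ᵀ * X₂}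

section clm

variable {a b c n p : ℕ}

/-- left multiplication as a CLM -/
noncomputable def mulL (A : Matrix (Fin a) (Fin b) ℝ) :
    Matrix (Fin b) (Fin c) ℝ →L[ℝ] Matrix (Fin a) (Fin c) ℝ :=
  LinearMap.toContinuousLinearMap
    { toFun := fun Z => A * Z
      map_add' := fun x y => Matrix.mul_add A x y
      map_smul' := fun r x => Matrix.mul_smul A r x }

/-- right multiplication as a CLM -/
noncomputable def mulR (B : Matrix (Fin b) (Fin c) ℝ) :
    Matrix (Fin a) (Fin b) ℝ →L[ℝ] Matrix (Fin a) (Fin c) ℝ :=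
  LinearMap.toContinuousLinearMap
    { toFun := fun Z => Z * B
      map_add' := fun x y => Matrix.add_mul x y B
      map_smul' := fun r x => Matrix.smul_mul r x B }

/-- transpose as a CLM -/
noncomputable def transCLM :
    Matrix (Fin a) (Fin b) ℝ →L[ℝ] Matrix (Fin b) (Fin a) ℝ :=
  LinearMap.toContinuousLinearMap
    { toFun := fun Z => Zᵀ
      map_add' := fun x y => transpose_add x y
      map_smul' := fun r x => transpose_smul r x }

@[simp] lemma mulL_apply (A : Matrix (Fin a) (Fin b) ℝ) (Z : Matrix (Fin b) (Fin c) ℝ) :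
    mulL A Z = A * Z := rfl

@[simp] lemma mulR_apply (B : Matrix (Fin b) (Fin c) ℝ) (Z : Matrix (Fin a) (Fin b) ℝ) :
    mulR B Z = Z * B := rfl

@[simp] lemma transCLM_apply (Z : Matrix (Fin a) (Fin b) ℝ) :
    (transCLM (a := a) (b := b)) Z = Zᵀ := rfl

end clm

theorem stmt_12 {n p : ℕ} (hn : 0 < n) (hp : 0 < p)
    (φ : Matrix (Fin n) (Fin p) ℝ →ₗ[ℝ] Matrix (Fin n) (Fin p) ℝ)
    (𝓕 : Submodule ℝ (Matrix (Fin n) (Fin p) ℝ))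
    (ψ : Matrix (Fin p) (Fin p) ℝ →ₗ[ℝ] Matrix (Fin p) (Fin p) ℝ)
    (hφ𝓕 : ∀ X ∈ 𝓕, φ X ∈ 𝓕)
    (hXT : ∀ X ∈ 𝓕, ∀ T ∈ Gspan 𝓕, X * T ∈ 𝓕)
    (hφsa : ∀ A B : Matrix (Fin n) (Fin p) ℝ, frobInner (φ A) B = frobInner A (φ B))
    (hψG : ∀ T ∈ Gspan 𝓕, ψ T ∈ Gspan 𝓕)
    (hφψ : ∀ X ∈ 𝓕, ∀ T ∈ Gspan 𝓕, φ (X * T) = φ X * ψ T)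
    (hψφ : ∀ X ∈ 𝓕, ψ ((φ X)ᵀ * X) = Xᵀ * φ X)
    (X : Matrix (Fin n) (Fin p) ℝ) (hX : X ∈ 𝓕) (hX1 : Xᵀ * φ X = 1) :
    Amap φ X = X ∧
    ∃ D : Matrix (Fin n) (Fin p) ℝ →L[ℝ] Matrix (Fin p) (Fin p) ℝ,
      HasFDerivAt (fun Y => Cmap φ (Amap φ Y)) D X ∧ ∀ Z ∈ 𝓕, D Z = 0 := by
  have hXtX : (φ X)ᵀ * X = (1 : Matrix (Fin p) (Fin p) ℝ) := by
    have := congrArg Matrix.transpose hX1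
    simpa using this
  have hfix : Amap φ X = X := by
    unfold Amap
    rw [Matrix.mul_assoc, hXtX, Matrix.mul_one, ← sub_smul]
    norm_num
  refine ⟨hfix, ?_⟩
  -- continuous linear versions
  let φ' : Matrix (Fin n) (Fin p) ℝ →L[ℝ] Matrix (Fin n) (Fin p) ℝ :=
    LinearMap.toContinuousLinearMap φ
  have hφ' : ∀ z, φ' z = φ z := fun z => rfl
  -- derivative of the inner map f1 : Y ↦ Y * (φ Y)ᵀ
  set D1 : Matrix (Fin n) (Fin p) ℝ →L[ℝ] Matrix (Fin n) (Fin n) ℝ :=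
    mulR (φ X)ᵀ + (mulL X).comp (transCLM.comp φ') with hD1
  have h1 : HasFDerivAt (fun Y : Matrix (Fin n) (Fin p) ℝ => Y * (φ Y)ᵀ) D1 X := by
    apply hasFDerivAt_matmul (f' := ContinuousLinearMap.id ℝ _)
      (g' := transCLM.comp φ') (hasFDerivAt_id X)
      ((transCLM.comp φ').hasFDerivAt)
    intro z
    simp [hD1, hφ']
    rfl
  -- derivative of f2 : Y ↦ (Y * (φ Y)ᵀ) * Y
  set D2 : Matrix (Fin n) (Fin p) ℝ →L[ℝ] Matrix (Fin n) (Fin p) ℝ :=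
    (mulR X).comp D1 + mulL (X * (φ X)ᵀ) with hD2
  have h2 : HasFDerivAt (fun Y : Matrix (Fin n) (Fin p) ℝ => Y * (φ Y)ᵀ * Y) D2 X := by
    apply hasFDerivAt_matmul h1 (hasFDerivAt_id X)
    intro z
    simp [hD2]
    rfl
  -- derivative of Amap
  set DG : Matrix (Fin n) (Fin p) ℝ →L[ℝ] Matrix (Fin n) (Fin p) ℝ :=
    (3/2 : ℝ) • ContinuousLinearMap.id ℝ _ - (1/2 : ℝ) • D2 with hDG
  have hG : HasFDerivAt (Amap φ) DG X := by
    have := (((hasFDerivAt_id X).const_smul (3/2 : ℝ)).sub (h2.const_smul (1/2 : ℝ)))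
    exact this
  -- derivative of Cmap at X
  set DC : Matrix (Fin n) (Fin p) ℝ →L[ℝ] Matrix (Fin p) (Fin p) ℝ :=
    (mulR (φ X)).comp transCLM + (mulL Xᵀ).comp φ' with hDCdef
  have hC : HasFDerivAt (Cmap φ) DC X := by
    have hmul : HasFDerivAt (fun Y : Matrix (Fin n) (Fin p) ℝ => Yᵀ * φ Y) DC X := by
      apply hasFDerivAt_matmul (f' := transCLM) (g' := φ')
        (transCLM.hasFDerivAt) (φ'.hasFDerivAt)
      intro z
      simp [hDCdef, hφ']
      rfl
    exact hmul.sub_const 1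
  -- composite
  refine ⟨DC.comp DG, ?_, ?_⟩
  · have hC' : HasFDerivAt (Cmap φ) DC (Amap φ X) := by rw [hfix]; exact hC
    exact hC'.comp X hG
  · intro Z hZ
    have hZ𝓕 := hZ
    -- membership facts
    have hT1 : (φ Z)ᵀ * X ∈ Gspan 𝓕 :=
      Submodule.subset_span ⟨φ Z, hφ𝓕 Z hZ, X, hX, rfl⟩
    have hT2 : (φ X)ᵀ * Z ∈ Gspan 𝓕 :=
      Submodule.subset_span ⟨φ X, hφ𝓕 X hX, Z, hZ, rfl⟩
    -- polarization
    have hpol : ψ ((φ Z)ᵀ * X + (φ X)ᵀ * Z) = Zᵀ * φ X + Xᵀ * φ Z := by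
      have e : (φ Z)ᵀ * X + (φ X)ᵀ * Z
          = (φ (X + Z))ᵀ * (X + Z) - ((φ X)ᵀ * X + (φ Z)ᵀ * Z) := by
        simp only [map_add, transpose_add, Matrix.add_mul, Matrix.mul_add]
        abel
      rw [e, map_sub, hψφ (X + Z) (Submodule.add_mem _ hX hZ), map_add ψ,
        hψφ X hX, hψφ Z hZ]
      simp only [map_add, transpose_add, Matrix.add_mul, Matrix.mul_add]
      abel
    -- compute D Z
    have hDZ : (DC.comp DG) Z = (DG Z)ᵀ * φ X + Xᵀ * φ (DG Z) := by
      simp [hDCdef, hφ']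
    rw [hDZ]
    have hDGZ : DG Z = (3/2 : ℝ) • Z
        - (1/2 : ℝ) • (Z * ((φ X)ᵀ * X) + X * ((φ Z)ᵀ * X) + X * ((φ X)ᵀ * Z)) := by
      simp [hDG, hD2, hD1, hφ', Matrix.add_mul, Matrix.mul_assoc]
    rw [hDGZ]
    have hφ2 : φ (X * ((φ Z)ᵀ * X)) = φ X * ψ ((φ Z)ᵀ * X) := hφψ X hX _ hT1
    have hφ3 : φ (X * ((φ X)ᵀ * Z)) = φ X * ψ ((φ X)ᵀ * Z) := hφψ X hX _ hT2
    rw [hXtX, Matrix.mul_one]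
    simp only [map_sub, _root_.map_smul, map_add, hφ2, hφ3, transpose_sub, transpose_smul,
      transpose_add, transpose_mul, transpose_transpose, Matrix.sub_mul, Matrix.smul_mul,
      Matrix.add_mul, Matrix.mul_sub, Matrix.mul_smul, Matrix.mul_add, Matrix.mul_assoc]
    rw [show φ Z * (Xᵀ * φ X) = φ Z from by rw [hX1, Matrix.mul_one],
      show φ X * (Xᵀ * φ X) = φ X from by rw [hX1, Matrix.mul_one],
      show Xᵀ * (φ X * ψ ((φ Z)ᵀ * X)) = ψ ((φ Z)ᵀ * X) from by
        rw [← Matrix.mul_assoc, hX1, Matrix.one_mul],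
      show Xᵀ * (φ X * ψ ((φ X)ᵀ * Z)) = ψ ((φ X)ᵀ * Z) from by
        rw [← Matrix.mul_assoc, hX1, Matrix.one_mul]]
    have hψ1 : ψ ((φ Z)ᵀ * X) = Zᵀ * φ X + Xᵀ * φ Z - ψ ((φ X)ᵀ * Z) :=
      eq_sub_of_add_eq (by rw [← map_add]; exact hpol)
    rw [hψ1]
    module
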